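/- Consider the election with n = (k+1)² voters, candidates B = {b₁,…,b_{k+1}} where b_i is approved exactly by voters {(i−1)(k+1)+1, …, i(k+1)}, and candidates D = {d₁,…,d_k} where d_i is approved exactly by voters v with v ≡ i (mod k+1), and committee size k. Then (a) the committee W = {b₁,…,b_k} violates α-JR for every α ≤ k/(k+1); and (b) the committee D satisfies α-JR for every α > k/n. -/

import Mathlib

/-- A committee `W` satisfies α-JR: every group `S` of size at least `α·n/k`
with a commonly approved candidate contains a voter approving a committee member. -/
def satisfiesAlphaJR {n : ℕ} {C : Type*} [Fintype C] [DecidableEq C]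
    (A : Fin n → Finset C) (W : Finset C) (k : ℕ) (α : ℝ) : Prop :=
  ∀ S : Finset (Fin n),
    α * n / k ≤ (S.card : ℝ) →
    (Finset.univ.filter fun c => ∀ v ∈ S, c ∈ A v).Nonempty →
    ∃ v ∈ S, (A v ∩ W).Nonempty

/-- The election with n = (k+1)² voters: candidate b_i (inl i) is approved exactly by
the i-th block of k+1 consecutive voters, and candidate d_i (inr i) is approved
exactly by the voters congruent to i modulo k+1. -/
def approvalsBD (k : ℕ) (v : Fin ((k + 1) * (k + 1))) : Finset (Fin (k + 1) ⊕ Fin k) :=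
  {Sum.inl ⟨(v : ℕ) / (k + 1), Nat.div_lt_of_lt_mul v.isLt⟩} ∪
    (if h : (v : ℕ) % (k + 1) < k then {Sum.inr ⟨(v : ℕ) % (k + 1), h⟩} else ∅)

lemma mem_approvalsBD {k : ℕ} {v : Fin ((k + 1) * (k + 1))} {c : Fin (k + 1) ⊕ Fin k} :
    c ∈ approvalsBD k v ↔
      c = Sum.inl ⟨(v : ℕ) / (k + 1), Nat.div_lt_of_lt_mul v.isLt⟩ ∨
      ∃ h : (v : ℕ) % (k + 1) < k, c = Sum.inr ⟨(v : ℕ) % (k + 1), h⟩ := by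
  unfold approvalsBD
  by_cases h : (v : ℕ) % (k + 1) < k <;> simp [h]

theorem approvalsBD_JR {k : ℕ} (hk : 1 ≤ k) :
    (∀ α : ℝ, 0 ≤ α → α ≤ (k : ℝ) / (k + 1) →
      ¬ satisfiesAlphaJR (approvalsBD k)
        ((Finset.univ : Finset (Fin k)).image fun i => (Sum.inl i.castSucc : Fin (k + 1) ⊕ Fin k))
        k α) ∧
    (∀ α : ℝ, (k : ℝ) / ((k + 1) * (k + 1)) < α →
      satisfiesAlphaJR (approvalsBD k)
        ((Finset.univ : Finset (Fin k)).image fun i => (Sum.inr i : Fin (k + 1) ⊕ Fin k))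
        k α) := by
  constructor
  · intro α hα0 hα hJR
    -- S = last block
    set S : Finset (Fin ((k + 1) * (k + 1))) :=
      Finset.univ.image (fun j : Fin (k + 1) =>
        (⟨(j : ℕ) + k * (k + 1), by have := j.isLt; nlinarith⟩ : Fin ((k + 1) * (k + 1)))) with hS
    have hdiv : ∀ v ∈ S, (v : ℕ) / (k + 1) = k := by
      intro v hv
      simp only [hS, Finset.mem_image, Finset.mem_univ, true_and] at hv
      obtain ⟨j, rfl⟩ := hv
      rw [Nat.add_mul_div_right _ _ (Nat.succ_pos k), Nat.div_eq_of_lt j.isLt]; omega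
    have hcard : S.card = k + 1 := by
      rw [hS, Finset.card_image_of_injective _ ?_, Finset.card_univ, Fintype.card_fin]
      intro a b hab
      simpa [Fin.ext_iff] using hab
    have h1 : α * ((k + 1) * (k + 1) : ℕ) / k ≤ (S.card : ℝ) := by
      rw [hcard]
      push_cast
      rw [div_le_iff₀ (by positivity)]
      have hαk : α * ((k : ℝ) + 1) ≤ k := (le_div_iff₀ (by positivity)).mp hα
      nlinarith
    have h2 : (Finset.univ.filter fun c => ∀ v ∈ S, c ∈ approvalsBD k v).Nonempty := by
      refine ⟨Sum.inl ⟨k, Nat.lt_succ_self k⟩, ?_⟩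
      simp only [Finset.mem_filter, Finset.mem_univ, true_and]
      intro v hv
      rw [mem_approvalsBD]
      left
      simp [Fin.ext_iff, hdiv v hv]
    obtain ⟨v, hvS, c, hc⟩ := hJR S h1 h2
    simp only [Finset.mem_inter, Finset.mem_image, Finset.mem_univ, true_and] at hc
    obtain ⟨hcA, i, hci⟩ := hc
    rw [mem_approvalsBD] at hcA
    rcases hcA with h | ⟨_, h⟩
    · rw [h] at hci
      have := hdiv v hvS
      have hi : (i : ℕ) < k := i.isLt
      simp only [Sum.inl.injEq, Fin.ext_iff, Fin.coe_castSucc] at hci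
      omega
    · rw [h] at hci; exact (Sum.inl_ne_inr hci).elim
  · intro α hα S hcard hne
    have hk1 : (1 : ℝ) < α * ((k + 1) * (k + 1) : ℕ) / k := by
      rw [lt_div_iff₀ (by positivity)]
      rw [div_lt_iff₀ (by positivity)] at hα
      push_cast
      nlinarith
    have hS2 : 2 ≤ S.card := by
      have : (1 : ℕ) < S.card := by exact_mod_cast lt_of_lt_of_le hk1 hcard
      omega
    obtain ⟨c, hc⟩ := hne
    simp only [Finset.mem_filter, Finset.mem_univ, true_and] at hc
    rcases c with i | i
    · -- commonly approved b_i
      by_cases hex : ∃ v ∈ S, (v : ℕ) % (k + 1) < k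
      · obtain ⟨v, hvS, hlt⟩ := hex
        refine ⟨v, hvS, Sum.inr ⟨(v : ℕ) % (k + 1), hlt⟩, ?_⟩
        rw [Finset.mem_inter, mem_approvalsBD]
        refine ⟨Or.inr ⟨hlt, rfl⟩, ?_⟩
        simp
      · push_neg at hex
        -- every v in S has v % (k+1) = k and v / (k+1) = i, so S is a subsingleton
        obtain ⟨a, haS, b, hbS, hab⟩ := Finset.one_lt_card.mp hS2
        have key : ∀ v ∈ S, (v : ℕ) = (i : ℕ) * (k + 1) + k := by
          intro v hv
          have h1 := hc v hv
          rw [mem_approvalsBD] at h1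
          rcases h1 with h | ⟨h, h'⟩
          · have hmod : (v : ℕ) % (k + 1) = k := by
              have h1 := hex v hv
              have h2 : (v : ℕ) % (k + 1) < k + 1 := Nat.mod_lt _ (by omega)
              omega
            have hdiv : (v : ℕ) / (k + 1) = (i : ℕ) := by
              have := h
              simp only [Sum.inl.injEq, Fin.ext_iff] at this
              omega
            have hdm := Nat.div_add_mod (v : ℕ) (k + 1)
            rw [hdiv, hmod] at hdm
            rw [← hdm]; ring
          · exact (Sum.inl_ne_inr h').elim
        exact absurd (Fin.ext ((key a haS).trans (key b hbS).symm)) hab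
    · -- commonly approved d_i
      obtain ⟨v, hvS⟩ := Finset.card_pos.mp (show 0 < S.card by omega)
      refine ⟨v, hvS, Sum.inr i, ?_⟩
      rw [Finset.mem_inter]
      exact ⟨hc v hvS, by simp⟩
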